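/- arXiv:1210.6160 — 7 statements merged into one kernel-verified Lean document; each statement's English description precedes it below -/
import Mathlib

section
/- Let {f_{α,γ}}_{α,γ∈ℤ} ⊆ ℂ[λ,∂] satisfy (βλ - αμ) f_{α+β,γ}(λ+μ, ∂) = f_{β,γ}(μ, ∂+λ) f_{α,β+γ}(λ, ∂) - f_{α,γ}(λ, ∂+μ) f_{β,α+γ}(μ, ∂) for all α,β,γ ∈ ℤ. If f_{1,γ₀} = 0 for some γ₀ ∈ ℤ, then f_{α,γ} = 0 for all α,γ ∈ ℤ with γ ≤ γ₀ and α+γ ≥ γ₀+1. -/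
open MvPolynomial

/-- Substitute the two variables of `f ∈ ℂ[λ,∂]` by elements of `ℂ[λ,μ,∂]`. -/
noncomputable def sub2 (f : MvPolynomial (Fin 2) ℂ) (a b : MvPolynomial (Fin 3) ℂ) :
    MvPolynomial (Fin 3) ℂ :=
  aeval ![a, b] f

/-- The structure coefficient equation of a free intermediate series module over the
Block-type Lie conformal algebra `B`, as an identity in `ℂ[λ,μ,∂]`
(`λ = X 0`, `μ = X 1`, `∂ = X 2`):
`(βλ - αμ) f_{α+β,γ}(λ+μ,∂)
   = f_{β,γ}(μ,∂+λ) f_{α,β+γ}(λ,∂) - f_{α,γ}(λ,∂+μ) f_{β,α+γ}(μ,∂)`. -/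
def StructEq (f : ℤ → ℤ → MvPolynomial (Fin 2) ℂ) : Prop :=
  ∀ α β γ : ℤ,
    (C (β : ℂ) * X 0 - C (α : ℂ) * X 1) * sub2 (f (α + β) γ) (X 0 + X 1) (X 2)
      = sub2 (f β γ) (X 1) (X 2 + X 0) * sub2 (f α (β + γ)) (X 0) (X 2)
        - sub2 (f α γ) (X 0) (X 2 + X 1) * sub2 (f β (α + γ)) (X 1) (X 2)

lemma sub2_zero (a b : MvPolynomial (Fin 3) ℂ) : sub2 0 a b = 0 := by simp [sub2]

lemma sub2_eq_zero_of (f : MvPolynomial (Fin 2) ℂ)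
    (h : sub2 f (X 0 + X 1) (X 2) = 0) : f = 0 := by
  have h2 := congrArg (aeval (R := ℂ) (![X 0, 0, X 1] : Fin 3 → MvPolynomial (Fin 2) ℂ)) h
  rw [map_zero, sub2, ← AlgHom.comp_apply, comp_aeval] at h2
  have e : (fun i => aeval (R := ℂ) (![X 0, 0, X 1] : Fin 3 → MvPolynomial (Fin 2) ℂ)
      ((![X 0 + X 1, X 2] : Fin 2 → MvPolynomial (Fin 3) ℂ) i)) = (X : Fin 2 → _) := by
    funext i
    fin_cases i <;> simp
  rw [e] at h2
  simpa using h2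

lemma factor_nz (c : ℂ) : (C 1 * X 0 - C c * X 1 : MvPolynomial (Fin 3) ℂ) ≠ 0 := by
  intro h
  have := congrArg (eval ![1, 0, 0]) h
  simp at this

/-- If `f_{1,γ₀} = 0` for some `γ₀`, then `f_{α,γ} = 0` whenever `γ ≤ γ₀` and
`α + γ ≥ γ₀ + 1`. -/
theorem lemma_pre4_a (f : ℤ → ℤ → MvPolynomial (Fin 2) ℂ) (hf : StructEq f)
    (γ₀ : ℤ) (h0 : f 1 γ₀ = 0) :
    ∀ α γ : ℤ, γ ≤ γ₀ → γ₀ + 1 ≤ α + γ → f α γ = 0 := by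
  have key : ∀ n : ℕ, ∀ γ : ℤ, γ ≤ γ₀ → γ₀ + 1 ≤ (n + 1 : ℤ) + γ → f ((n : ℤ) + 1) γ = 0 := by
    intro n
    induction n with
    | zero =>
      intro γ h1 h2
      have hγ : γ = γ₀ := by omega
      simpa [hγ] using h0
    | succ n ih =>
      intro γ h1 h2
      have heq := hf ((n : ℤ) + 1) 1 γ
      have t1 : sub2 (f 1 γ) (X 1) (X 2 + X 0) * sub2 (f ((n : ℤ) + 1) (1 + γ)) (X 0) (X 2)
          = 0 := by
        by_cases hc : γ = γ₀
        · rw [hc, h0, sub2_zero, zero_mul]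
        · rw [ih (1 + γ) (by omega) (by push_cast at h2 ⊢; omega), sub2_zero, mul_zero]
      have t2 : sub2 (f ((n : ℤ) + 1) γ) (X 0) (X 2 + X 1)
          * sub2 (f 1 ((n : ℤ) + 1 + γ)) (X 1) (X 2) = 0 := by
        by_cases hc : (n : ℤ) + 1 + γ = γ₀
        · rw [hc, h0, sub2_zero, mul_zero]
        · rw [ih γ h1 (by push_cast at h2; omega), sub2_zero, zero_mul]
      rw [t1, t2, sub_zero] at heq
      have hnz : (C ((1 : ℤ) : ℂ) * X 0 - C (((n : ℤ) + 1 : ℤ) : ℂ) * X 1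
          : MvPolynomial (Fin 3) ℂ) ≠ 0 := by
        push_cast
        exact factor_nz _
      have hz := (mul_eq_zero.mp heq).resolve_left hnz
      have := sub2_eq_zero_of _ hz
      have harg : ((n : ℤ) + 1 + 1) = ((n : ℕ) + 1 : ℤ) + 1 := by norm_num
      rwa [harg] at this
  intro α γ h1 h2
  have hα : 1 ≤ α := by omega
  have hn : α = ((α - 1).toNat : ℤ) + 1 := by omega
  rw [hn]
  exact key _ γ h1 (by omega)
end

section
/- Let {f_{α,γ}}_{α,γ∈ℤ} ⊆ ℂ[λ,∂] satisfy (βλ - αμ) f_{α+β,γ}(λ+μ, ∂) = f_{β,γ}(μ, ∂+λ) f_{α,β+γ}(λ, ∂) - f_{α,γ}(λ, ∂+μ) f_{β,α+γ}(μ, ∂) for all α,β,γ ∈ ℤ. If f_{-1,γ₀} = 0 for some γ₀ ∈ ℤ, then f_{α,γ} = 0 for all α,γ ∈ ℤ with γ ≥ γ₀ and α+γ ≤ γ₀-1. -/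
open MvPolynomial

lemma coeff_ne (b a : ℂ) (hb : b ≠ 0) :
    (C b * X 0 - C a * X 1 : MvPolynomial (Fin 3) ℂ) ≠ 0 := by
  intro h
  have h2 := congrArg (eval ![(1:ℂ), 0, 0]) h
  simp at h2
  exact hb h2

lemma sub2_eq_zero (g : MvPolynomial (Fin 2) ℂ)
    (h : sub2 g (X 0 + X 1) (X 2) = 0) : g = 0 := by
  have h2 : (aeval ![X 0, 0, X 1] : MvPolynomial (Fin 3) ℂ →ₐ[ℂ] MvPolynomial (Fin 2) ℂ)
      (sub2 g (X 0 + X 1) (X 2)) = 0 := by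
    rw [h, map_zero]
  rw [sub2, ← AlgHom.comp_apply, comp_aeval] at h2
  have hfun : (fun i => (aeval ![X 0, 0, X 1] :
      MvPolynomial (Fin 3) ℂ →ₐ[ℂ] MvPolynomial (Fin 2) ℂ)
        (![(X 0 + X 1 : MvPolynomial (Fin 3) ℂ), X 2] i))
      = (X : Fin 2 → MvPolynomial (Fin 2) ℂ) := by
    funext i; fin_cases i <;> simp
  rw [hfun, aeval_X_left_apply] at h2
  exact h2

/-- From the structure equation with `β = -1`: if `f α (γ-1) = 0` and `f α γ = 0`
then `f (α-1) γ = 0`. -/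
lemma stepB (f : ℤ → ℤ → MvPolynomial (Fin 2) ℂ) (hf : StructEq f) (α γ : ℤ)
    (h1 : f α (γ - 1) = 0) (h2 : f α γ = 0) : f (α - 1) γ = 0 := by
  have h := hf α (-1) γ
  rw [show (-1 : ℤ) + γ = γ - 1 by ring, show α + (-1 : ℤ) = α - 1 by ring,
    h1, h2, sub2_zero, sub2_zero, mul_zero, zero_mul, sub_zero] at h
  rcases mul_eq_zero.mp h with h' | h'
  · exact absurd h' (coeff_ne _ _ (by norm_num))
  · exact sub2_eq_zero _ h'

/-- Variant using `f (-1) γ = 0` instead of `f α (γ-1) = 0`. -/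
lemma stepA (f : ℤ → ℤ → MvPolynomial (Fin 2) ℂ) (hf : StructEq f) (α γ : ℤ)
    (h1 : f (-1) γ = 0) (h2 : f α γ = 0) : f (α - 1) γ = 0 := by
  have h := hf α (-1) γ
  rw [show α + (-1 : ℤ) = α - 1 by ring, h1, h2, sub2_zero, sub2_zero,
    zero_mul, zero_mul, sub_zero] at h
  rcases mul_eq_zero.mp h with h' | h'
  · exact absurd h' (coeff_ne _ _ (by norm_num))
  · exact sub2_eq_zero _ h'

/-- From the structure equation with `α = -1`: if `β ≠ 0`, `f (-1) (β+γ) = 0` and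
`f β (γ-1) = 0` then `f (β-1) γ = 0`. -/
lemma baseC (f : ℤ → ℤ → MvPolynomial (Fin 2) ℂ) (hf : StructEq f) (β γ : ℤ)
    (hβ : (β : ℂ) ≠ 0) (h1 : f (-1) (β + γ) = 0) (h2 : f β (γ - 1) = 0) :
    f (β - 1) γ = 0 := by
  have h := hf (-1) β γ
  rw [show (-1 : ℤ) + β = β - 1 by ring, show (-1 : ℤ) + γ = γ - 1 by ring,
    h1, h2, sub2_zero, sub2_zero, mul_zero, mul_zero, sub_zero] at h
  rcases mul_eq_zero.mp h with h' | h'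
  · exact absurd h' (coeff_ne _ _ hβ)
  · exact sub2_eq_zero _ h'

/-- If `f_{-1,γ₀} = 0` for some `γ₀`, then `f_{α,γ} = 0` whenever `γ ≥ γ₀` and
`α + γ ≤ γ₀ - 1`. -/
theorem lemma_pre4_b (f : ℤ → ℤ → MvPolynomial (Fin 2) ℂ) (hf : StructEq f)
    (γ₀ : ℤ) (h0 : f (-1) γ₀ = 0) :
    ∀ α γ : ℤ, γ₀ ≤ γ → α + γ ≤ γ₀ - 1 → f α γ = 0 := by
  have key : ∀ k : ℕ, ∀ n : ℕ, f (-1 - k - n) (γ₀ + k) = 0 := by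
    intro k
    induction k with
    | zero =>
      intro n
      induction n with
      | zero => simpa using h0
      | succ n ih =>
        have := stepA f hf (-1 - 0 - n) (γ₀ + 0) (by simpa using h0) ih
        rw [show (-1 - (0:ℤ) - n) - 1 = -1 - (0:ℕ) - ((n+1 : ℕ) : ℤ) by push_cast; ring] at this
        exact this
    | succ k ihk =>
      have base : f (-1 - (k+1 : ℕ) - (0:ℕ)) (γ₀ + (k+1 : ℕ)) = 0 := by
        have h2 : f (-(k+1 : ℤ)) ((γ₀ + (k+1 : ℕ)) - 1) = 0 := by
          have := ihk 0
          rw [show (-1 - (k:ℤ) - (0:ℕ)) = -(k+1 : ℤ) by push_cast; ring,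
            show (γ₀ + (k:ℕ) : ℤ) = (γ₀ + (k+1 : ℕ)) - 1 by push_cast; ring] at this
          exact this
        have h1 : f (-1) (-(k+1 : ℤ) + (γ₀ + (k+1 : ℕ))) = 0 := by
          rw [show (-(k+1 : ℤ) + (γ₀ + (k+1 : ℕ))) = γ₀ by push_cast; ring]
          exact h0
        have := baseC f hf (-(k+1 : ℤ)) (γ₀ + (k+1 : ℕ))
          (Int.cast_ne_zero.mpr (by omega)) h1 h2
        rw [show (-(k+1 : ℤ)) - 1 = -1 - ((k+1 : ℕ) : ℤ) - ((0:ℕ) : ℤ) by push_cast; ring] at this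
        exact this
      intro n
      induction n with
      | zero => exact base
      | succ n ih =>
        have h1 : f (-1 - (k+1 : ℕ) - n) ((γ₀ + (k+1 : ℕ)) - 1) = 0 := by
          have := ihk (n+1)
          rw [show (-1 - (k:ℤ) - ((n+1 : ℕ) : ℤ)) = -1 - ((k+1:ℕ) : ℤ) - (n : ℤ) by push_cast; ring,
            show (γ₀ + (k:ℕ) : ℤ) = (γ₀ + (k+1 : ℕ)) - 1 by push_cast; ring] at this
          exact this
        have := stepB f hf (-1 - (k+1 : ℕ) - n) (γ₀ + (k+1 : ℕ)) h1 ih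
        rw [show (-1 - ((k+1:ℕ) : ℤ) - (n:ℤ)) - 1 = -1 - ((k+1 : ℕ) : ℤ) - ((n+1 : ℕ) : ℤ) by push_cast; ring] at this
        exact this
  intro α γ hγ hαγ
  obtain ⟨k, hk⟩ : ∃ k : ℕ, γ = γ₀ + k := ⟨(γ - γ₀).toNat, by omega⟩
  obtain ⟨n, hn⟩ : ∃ n : ℕ, α = -1 - k - n := ⟨(-1 - k - α).toNat, by omega⟩
  rw [hk, hn]
  exact key k n
end

section
/- Let {f_{α,γ}}_{α,γ∈ℤ} ⊆ ℂ[λ,∂] satisfy the structure coefficient equation (βλ - αμ) f_{α+β,γ}(λ+μ, ∂) = f_{β,γ}(μ, ∂+λ) f_{α,β+γ}(λ, ∂) - f_{α,γ}(λ, ∂+μ) f_{β,α+γ}(μ, ∂). If f_{1,γ₁} = 0 and f_{1,γ₂} = 0 for some integers γ₁ < γ₂, then f_{1,γ} = 0 for all γ with γ₁ ≤ γ ≤ γ₂. -/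
open MvPolynomial

lemma sub2_inj (p : MvPolynomial (Fin 2) ℂ) (h : sub2 p (X 0 + X 1) (X 2) = 0) :
    p = 0 := by
  classical
  let ψ : MvPolynomial (Fin 3) ℂ →ₐ[ℂ] MvPolynomial (Fin 2) ℂ :=
    aeval ![X 0, 0, X 1]
  have hcomp : ψ.comp (aeval ![X 0 + X 1, (X 2 : MvPolynomial (Fin 3) ℂ)])
      = AlgHom.id ℂ (MvPolynomial (Fin 2) ℂ) := by
    apply MvPolynomial.algHom_ext
    intro i
    fin_cases i <;> simp [ψ]
  have := congrArg ψ h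
  have hp : ψ (sub2 p (X 0 + X 1) (X 2)) = p := by
    have := AlgHom.congr_fun hcomp p
    simpa [sub2] using this
  rw [hp] at this
  simpa using this

lemma factor_ne (a b : ℂ) (hb : b ≠ 0) :
    (C a * X 0 - C b * X 1 : MvPolynomial (Fin 3) ℂ) ≠ 0 := by
  intro h
  have := congrArg (eval ![0, 1, 0]) h
  simp at this
  exact hb this

lemma cancel_factor (p : MvPolynomial (Fin 2) ℂ) (a b : ℂ) (hb : b ≠ 0)
    (h : (C a * X 0 - C b * X 1) * sub2 p (X 0 + X 1) (X 2) = 0) : p = 0 := by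
  rcases mul_eq_zero.mp h with h' | h'
  · exact absurd h' (factor_ne a b hb)
  · exact sub2_inj p h'

/-- Downward propagation of vanishing: if `f 1 γ₀ = 0` then `f (n+1) γ = 0` for
`γ₀ - n ≤ γ ≤ γ₀`. -/
lemma aux_prop (f : ℤ → ℤ → MvPolynomial (Fin 2) ℂ) (hf : StructEq f) (γ₀ : ℤ)
    (h0 : f 1 γ₀ = 0) :
    ∀ n : ℕ, ∀ γ : ℤ, γ₀ - n ≤ γ → γ ≤ γ₀ → f ((n : ℤ) + 1) γ = 0 := by
  intro n
  induction n with
  | zero =>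
    intro γ hl hr
    have hγ : γ = γ₀ := by omega
    subst hγ
    simpa using h0
  | succ n ih =>
    intro γ hl hr
    have heq := hf 1 ((n : ℤ) + 1) γ
    have hA : sub2 (f ((n : ℤ) + 1) γ) (X 1) (X 2 + X 0)
        * sub2 (f 1 (((n : ℤ) + 1) + γ)) (X 0) (X 2) = 0 := by
      by_cases h : γ₀ - (n : ℤ) ≤ γ
      · rw [ih γ h hr, sub2_zero, zero_mul]
      · have hγ : ((n : ℤ) + 1) + γ = γ₀ := by omega
        rw [hγ, h0, sub2_zero, mul_zero]
    have hB : sub2 (f 1 γ) (X 0) (X 2 + X 1)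
        * sub2 (f ((n : ℤ) + 1) (1 + γ)) (X 1) (X 2) = 0 := by
      by_cases h : γ = γ₀
      · rw [h, h0, sub2_zero, zero_mul]
      · rw [ih (1 + γ) (by omega) (by omega), sub2_zero, mul_zero]
    rw [hA, hB, sub_zero] at heq
    have hidx : ((n : ℤ) + 1 : ℤ) + 1 = 1 + ((n : ℤ) + 1) := by ring
    have : f (1 + ((n : ℤ) + 1)) γ = 0 := by
      apply cancel_factor _ (((n : ℤ) + 1 : ℤ) : ℂ) ((1 : ℤ) : ℂ) (by norm_num)
      rw [← heq]
    push_cast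
    rw [hidx]
    exact this

/-- If `f_{1,γ₁} = f_{1,γ₂} = 0` for some `γ₁ < γ₂`, then `f_{1,γ} = 0` for all
`γ₁ ≤ γ ≤ γ₂`. -/
theorem lemma_strive1_a (f : ℤ → ℤ → MvPolynomial (Fin 2) ℂ) (hf : StructEq f)
    (γ₁ γ₂ : ℤ) (h12 : γ₁ < γ₂) (h1 : f 1 γ₁ = 0) (h2 : f 1 γ₂ = 0) :
    ∀ γ : ℤ, γ₁ ≤ γ → γ ≤ γ₂ → f 1 γ = 0 := by
  intro γ hγ1 hγ2
  set n : ℕ := (γ₂ - γ₁).toNat with hn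
  have hnℤ : (n : ℤ) = γ₂ - γ₁ := by
    rw [hn]; exact Int.toNat_of_nonneg (by omega)
  set N : ℤ := (n : ℤ) + 1 with hN
  have hA : f N γ = 0 := aux_prop f hf γ₂ h2 n γ (by omega) hγ2
  have hB : f N (1 - N + γ) = 0 := aux_prop f hf γ₁ h1 n (1 - N + γ) (by omega) (by omega)
  have heq := hf N (1 - N) γ
  have hidx : N + (1 - N) = 1 := by ring
  rw [hidx, hA, hB, sub2_zero, sub2_zero, mul_zero, zero_mul, zero_sub, neg_zero] at heq
  exact cancel_factor _ _ _ (show ((N : ℤ) : ℂ) ≠ 0 by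
    exact_mod_cast (by omega : N ≠ 0)) heq
end

section
/- Let f ∈ ℂ[x,y] be a polynomial satisfying f(μ, ∂+λ)·f(λ, ∂) = f(λ, ∂+μ)·f(μ, ∂) as an identity in ℂ[λ,μ,∂]. Then f does not depend on its second variable, i.e., f(x,y) = h(x) for some h ∈ ℂ[x]. -/
open MvPolynomial

section Aux

/-- Pushing a two-variable substitution through `finSuccEquiv ℂ 2`. -/
lemma sub2_finSuccEquiv (f : MvPolynomial (Fin 2) ℂ) (a b : MvPolynomial (Fin 3) ℂ) :
    finSuccEquiv ℂ 2 (sub2 f a b)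
      = MvPolynomial.aeval ![finSuccEquiv ℂ 2 a, finSuccEquiv ℂ 2 b] f := by
  have h : ((finSuccEquiv ℂ 2).toAlgHom.comp (MvPolynomial.aeval ![a, b]))
      = MvPolynomial.aeval ![finSuccEquiv ℂ 2 a, finSuccEquiv ℂ 2 b] := by
    apply MvPolynomial.algHom_ext
    intro i
    fin_cases i <;> simp
  exact AlgHom.congr_fun h f

lemma finSuccEquiv_X1 :
    finSuccEquiv ℂ 2 (X 1 : MvPolynomial (Fin 3) ℂ) = Polynomial.C (X 0) := by
  have h : (X 1 : MvPolynomial (Fin 3) ℂ) = X ((0 : Fin 2).succ) := rfl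
  rw [h, finSuccEquiv_X_succ]

lemma finSuccEquiv_X2 :
    finSuccEquiv ℂ 2 (X 2 : MvPolynomial (Fin 3) ℂ) = Polynomial.C (X 1) := by
  have h : (X 2 : MvPolynomial (Fin 3) ℂ) = X ((1 : Fin 2).succ) := rfl
  rw [h, finSuccEquiv_X_succ]

/-- `D = C f`. -/
lemma aeval_CC (f : MvPolynomial (Fin 2) ℂ) :
    (MvPolynomial.aeval ![Polynomial.C (X 0), Polynomial.C (X 1)] f
      : Polynomial (MvPolynomial (Fin 2) ℂ)) = Polynomial.C f := by
  have h : (Polynomial.CAlgHom (R := ℂ) :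
        MvPolynomial (Fin 2) ℂ →ₐ[ℂ] Polynomial (MvPolynomial (Fin 2) ℂ))
      = MvPolynomial.aeval ![Polynomial.C (X 0), Polynomial.C (X 1)] := by
    apply MvPolynomial.algHom_ext
    intro i
    fin_cases i <;> simp [Polynomial.CAlgHom]
  exact (AlgHom.congr_fun h f).symm

/-- `B` as an injective image of `finSuccEquiv ℂ 1 f`. -/
lemma aeval_B (f : MvPolynomial (Fin 2) ℂ) :
    (MvPolynomial.aeval ![(Polynomial.X : Polynomial (MvPolynomial (Fin 2) ℂ)),
        Polynomial.C (X 1)] f)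
      = Polynomial.map (MvPolynomial.rename (fun _ : Fin 1 => (1 : Fin 2))).toRingHom
          (finSuccEquiv ℂ 1 f) := by
  have h : (Polynomial.mapAlgHom (MvPolynomial.rename (fun _ : Fin 1 => (1 : Fin 2)))).comp
        (finSuccEquiv ℂ 1).toAlgHom
      = MvPolynomial.aeval ![(Polynomial.X : Polynomial (MvPolynomial (Fin 2) ℂ)),
          Polynomial.C (X 1)] := by
    apply MvPolynomial.algHom_ext
    intro i
    fin_cases i
    · simp [finSuccEquiv_X_zero]
    · have h1 : (X 1 : MvPolynomial (Fin 2) ℂ) = X ((0 : Fin 1).succ) := rfl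
      simp [h1, finSuccEquiv_X_succ]
  exact (AlgHom.congr_fun h f).symm

/-- `A₀` as an injective image of `finSuccEquiv ℂ 1 (rename (swap 0 1) f)`. -/
lemma aeval_A0 (f : MvPolynomial (Fin 2) ℂ) :
    (MvPolynomial.aeval ![Polynomial.C (X 0),
        (Polynomial.X : Polynomial (MvPolynomial (Fin 2) ℂ))] f)
      = Polynomial.map (MvPolynomial.rename (fun _ : Fin 1 => (0 : Fin 2))).toRingHom
          (finSuccEquiv ℂ 1 (MvPolynomial.rename (Equiv.swap 0 1) f)) := by
  have h : (((Polynomial.mapAlgHom (MvPolynomial.rename (fun _ : Fin 1 => (0 : Fin 2)))).comp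
        (finSuccEquiv ℂ 1).toAlgHom).comp
          (MvPolynomial.rename (Equiv.swap (0 : Fin 2) 1)))
      = MvPolynomial.aeval ![Polynomial.C (X 0),
          (Polynomial.X : Polynomial (MvPolynomial (Fin 2) ℂ))] := by
    apply MvPolynomial.algHom_ext
    intro i
    fin_cases i
    · have h1 : (X 1 : MvPolynomial (Fin 2) ℂ) = X ((0 : Fin 1).succ) := rfl
      simp [Equiv.swap_apply_left, h1, finSuccEquiv_X_succ]
    · simp [Equiv.swap_apply_right, finSuccEquiv_X_zero]
  exact (AlgHom.congr_fun h f).symm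

/-- `Cc = map τ B` for the shift `τ : ∂ ↦ ∂ + μ`. -/
lemma aeval_Cc (f : MvPolynomial (Fin 2) ℂ) :
    (MvPolynomial.aeval ![(Polynomial.X : Polynomial (MvPolynomial (Fin 2) ℂ)),
        Polynomial.C (X 1) + Polynomial.C (X 0)] f)
      = Polynomial.map (MvPolynomial.aeval (R := ℂ) ![X 0, X 1 + X 0]).toRingHom
          (MvPolynomial.aeval ![(Polynomial.X : Polynomial (MvPolynomial (Fin 2) ℂ)),
            Polynomial.C (X 1)] f) := by
  have h : (Polynomial.mapAlgHom (MvPolynomial.aeval (R := ℂ) ![X 0, X 1 + X 0])).comp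
        (MvPolynomial.aeval ![(Polynomial.X : Polynomial (MvPolynomial (Fin 2) ℂ)),
          Polynomial.C (X 1)])
      = MvPolynomial.aeval ![(Polynomial.X : Polynomial (MvPolynomial (Fin 2) ℂ)),
          Polynomial.C (X 1) + Polynomial.C (X 0)] := by
    apply MvPolynomial.algHom_ext
    intro i
    fin_cases i <;> simp
  exact (AlgHom.congr_fun h f).symm

lemma tau_injective : Function.Injective ((MvPolynomial.aeval (R := ℂ)
    ![X 0, X 1 + X 0] : MvPolynomial (Fin 2) ℂ →ₐ[ℂ] MvPolynomial (Fin 2) ℂ)) := by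
  have h : (MvPolynomial.aeval (R := ℂ) ![X 0, X 1 - X 0]).comp
      (MvPolynomial.aeval (R := ℂ) ![(X 0 : MvPolynomial (Fin 2) ℂ), X 1 + X 0])
      = AlgHom.id ℂ _ := by
    apply MvPolynomial.algHom_ext
    intro i
    fin_cases i <;> simp
  intro a b hab
  have h2 := congrArg (MvPolynomial.aeval (R := ℂ)
    ![(X 0 : MvPolynomial (Fin 2) ℂ), X 1 - X 0]) hab
  rwa [← AlgHom.comp_apply, ← AlgHom.comp_apply, h, AlgHom.id_apply, AlgHom.id_apply] at h2

/-- `A = taylor (X 1) A₀`. -/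
lemma aeval_A (f : MvPolynomial (Fin 2) ℂ) :
    (MvPolynomial.aeval ![Polynomial.C (X 0),
        Polynomial.C (X 1) + (Polynomial.X : Polynomial (MvPolynomial (Fin 2) ℂ))] f)
      = Polynomial.taylor (X 1)
          (MvPolynomial.aeval ![Polynomial.C (X 0),
            (Polynomial.X : Polynomial (MvPolynomial (Fin 2) ℂ))] f) := by
  rw [Polynomial.taylor_apply, Polynomial.comp_eq_aeval]
  have h : ((Polynomial.aeval (Polynomial.X + Polynomial.C (X 1) :
        Polynomial (MvPolynomial (Fin 2) ℂ))).restrictScalars ℂ).comp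
        (MvPolynomial.aeval ![Polynomial.C (X 0),
          (Polynomial.X : Polynomial (MvPolynomial (Fin 2) ℂ))])
      = MvPolynomial.aeval ![Polynomial.C (X 0),
          Polynomial.C (X 1) + (Polynomial.X : Polynomial (MvPolynomial (Fin 2) ℂ))] := by
    apply MvPolynomial.algHom_ext
    intro i
    fin_cases i <;> simp [add_comm]
  exact (AlgHom.congr_fun h f).symm

/-- A polynomial in two variables of `y`-degree zero is a polynomial in `x`. -/
lemma exists_of_degreeOf_eq_zero (f : MvPolynomial (Fin 2) ℂ) (hdeg : degreeOf 1 f = 0) :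
    ∃ h : Polynomial ℂ, f = Polynomial.aeval (X 0 : MvPolynomial (Fin 2) ℂ) h := by
  refine ⟨f.support.sum fun d => Polynomial.C (coeff d f) * Polynomial.X ^ (d 0), ?_⟩
  rw [map_sum]
  conv_lhs => rw [← support_sum_monomial_coeff f]
  refine Finset.sum_congr rfl fun d hd => ?_
  have hd1 : d 1 = 0 := by
    have := monomial_le_degreeOf 1 hd
    omega
  have hdeq : d = Finsupp.single 0 (d 0) := by
    ext i
    fin_cases i
    · simp
    · simp [hd1]
  rw [map_mul, map_pow, Polynomial.aeval_C, Polynomial.aeval_X, X_pow_eq_monomial,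
    MvPolynomial.algebraMap_eq, C_mul_monomial, mul_one, ← hdeq]

end Aux

/-- If `f ∈ ℂ[x,y]` satisfies `f(μ, ∂+λ) f(λ, ∂) = f(λ, ∂+μ) f(μ, ∂)` in `ℂ[λ,μ,∂]`
(`λ = X 0`, `μ = X 1`, `∂ = X 2`), then `f` does not depend on its second variable:
`f(x,y) = h(x)` for some `h ∈ ℂ[x]`. -/
theorem indep_second_var (f : MvPolynomial (Fin 2) ℂ)
    (hf : sub2 f (X 1) (X 2 + X 0) * sub2 f (X 0) (X 2)
        = sub2 f (X 0) (X 2 + X 1) * sub2 f (X 1) (X 2)) :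
    ∃ h : Polynomial ℂ, f = Polynomial.aeval (X 0 : MvPolynomial (Fin 2) ℂ) h := by
  by_cases hf0 : f = 0
  · exact ⟨0, by simp [hf0]⟩
  -- push the hypothesis through `finSuccEquiv ℂ 2`, pulling out the variable `λ`
  apply exists_of_degreeOf_eq_zero
  have hmain := congrArg (finSuccEquiv ℂ 2) hf
  rw [map_mul, map_mul, sub2_finSuccEquiv, sub2_finSuccEquiv, sub2_finSuccEquiv,
    sub2_finSuccEquiv, map_add, map_add, finSuccEquiv_X1, finSuccEquiv_X2,
    finSuccEquiv_X_zero] at hmain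
  set A := MvPolynomial.aeval ![Polynomial.C (X 0 : MvPolynomial (Fin 2) ℂ),
      Polynomial.C (X 1 : MvPolynomial (Fin 2) ℂ) + (Polynomial.X : Polynomial (MvPolynomial (Fin 2) ℂ))] f with hA
  set B := MvPolynomial.aeval ![(Polynomial.X : Polynomial (MvPolynomial (Fin 2) ℂ)),
      Polynomial.C (X 1 : MvPolynomial (Fin 2) ℂ)] f with hB
  set Cc := MvPolynomial.aeval ![(Polynomial.X : Polynomial (MvPolynomial (Fin 2) ℂ)),
      Polynomial.C (X 1 : MvPolynomial (Fin 2) ℂ) + Polynomial.C (X 0 : MvPolynomial (Fin 2) ℂ)] f with hCc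
  set D := MvPolynomial.aeval ![Polynomial.C (X 0 : MvPolynomial (Fin 2) ℂ), Polynomial.C (X 1 : MvPolynomial (Fin 2) ℂ)] f with hD
  set A0 := MvPolynomial.aeval ![Polynomial.C (X 0 : MvPolynomial (Fin 2) ℂ),
      (Polynomial.X : Polynomial (MvPolynomial (Fin 2) ℂ))] f with hA0
  -- nonvanishing of the four factors
  have hBne : B ≠ 0 := by
    rw [hB, aeval_B]
    intro h0
    apply hf0
    have h1 := Polynomial.map_injective _
      (MvPolynomial.rename_injective (fun _ : Fin 1 => (1 : Fin 2))
        (fun a b _ => Subsingleton.elim a b))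
      (by rw [h0, Polynomial.map_zero] :
        Polynomial.map (MvPolynomial.rename (fun _ : Fin 1 => (1 : Fin 2))).toRingHom
          (finSuccEquiv ℂ 1 f) = Polynomial.map _ 0)
    exact (map_eq_zero_iff _ (finSuccEquiv ℂ 1).injective).mp h1
  have hA0ne : A0 ≠ 0 := by
    rw [hA0, aeval_A0]
    intro h0
    apply hf0
    have h1 := Polynomial.map_injective _
      (MvPolynomial.rename_injective (fun _ : Fin 1 => (0 : Fin 2))
        (fun a b _ => Subsingleton.elim a b))
      (by rw [h0, Polynomial.map_zero] :
        Polynomial.map (MvPolynomial.rename (fun _ : Fin 1 => (0 : Fin 2))).toRingHom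
          (finSuccEquiv ℂ 1 (MvPolynomial.rename (Equiv.swap 0 1) f)) = Polynomial.map _ 0)
    have h2 := (map_eq_zero_iff _ (finSuccEquiv ℂ 1).injective).mp h1
    exact (map_eq_zero_iff _
      (MvPolynomial.rename_injective _ (Equiv.swap (0 : Fin 2) 1).injective)).mp h2
  have hAne : A ≠ 0 := by
    rw [hA, aeval_A f]
    intro h0
    apply hA0ne
    have := congrArg (Polynomial.taylor (-X 1)) h0
    rwa [Polynomial.taylor_taylor, neg_add_cancel, Polynomial.taylor_zero, map_zero] at this
  have hCcne : Cc ≠ 0 := by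
    rw [hCc, aeval_Cc]
    intro h0
    exact hBne (Polynomial.map_injective _ tau_injective
      (by rw [h0, Polynomial.map_zero]))
  have hDne : D ≠ 0 := by
    rw [hD, aeval_CC]
    exact fun h0 => hf0 (Polynomial.C_eq_zero.mp h0)
  -- degree bookkeeping
  have hdegA : A.natDegree = degreeOf 1 f := by
    rw [hA, aeval_A f, Polynomial.natDegree_taylor, aeval_A0 f,
      Polynomial.natDegree_map_eq_of_injective
        (MvPolynomial.rename_injective _ (fun a b _ => Subsingleton.elim a b)),
      natDegree_finSuccEquiv]
    have h1 := degreeOf_rename_of_injective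
      (p := f) (Equiv.swap (0 : Fin 2) 1).injective 1
    rwa [Equiv.swap_apply_right] at h1
  have hdegCc : Cc.natDegree = B.natDegree := by
    rw [hCc, aeval_Cc, Polynomial.natDegree_map_eq_of_injective tau_injective]
  have hdegD : D.natDegree = 0 := by
    rw [hD, aeval_CC, Polynomial.natDegree_C]
  have hdeg := congrArg Polynomial.natDegree hmain
  rw [Polynomial.natDegree_mul hAne hBne, Polynomial.natDegree_mul hCcne hDne,
    hdegCc, hdegD] at hdeg
  omega
end

section
/- Let f ∈ ℂ[λ,∂] be a nonconstant polynomial and h ∈ ℂ[μ] such that αμ·(f(λ+μ,∂) - f(λ,∂)) = h(μ)·(f(λ,∂+μ) - f(λ,∂)) as an identity in ℂ[λ,μ,∂], where α ∈ ℤ, α ≠ 0. Then h(μ) = Cμ for some constant C ∈ ℂ. -/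
open MvPolynomial

section Aux

local notation "AA" => MvPolynomial (Fin 2) ℂ

open Polynomial in
lemma my_taylor_coeff_top {S : Type*} [CommRing S] (p : S[X]) (r : S) (k : ℕ)
    (hp : p.natDegree ≤ k) : (taylor r p).coeff k = p.coeff k := by
  rw [taylor_coeff]
  have h1 : hasseDeriv k p = Polynomial.C (p.coeff k) := by
    ext n
    rw [Polynomial.hasseDeriv_coeff, Polynomial.coeff_C]
    rcases n with _ | n
    · simp
    · have : p.coeff (n + 1 + k) = 0 := Polynomial.coeff_eq_zero_of_natDegree_lt (by omega)
      simp [this]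
  rw [h1, Polynomial.eval_C]

open Polynomial in
lemma my_taylor_coeff_sub1 {S : Type*} [CommRing S] (p : S[X]) (r : S) (e : ℕ)
    (hp : p.natDegree ≤ e + 1) :
    (taylor r p).coeff e = p.coeff e + ((e : S) + 1) * r * p.coeff (e + 1) := by
  rw [taylor_coeff]
  have h1 : hasseDeriv e p = Polynomial.C (p.coeff e)
      + Polynomial.C (((e : S) + 1) * p.coeff (e + 1)) * Polynomial.X := by
    ext n
    rw [Polynomial.hasseDeriv_coeff, Polynomial.coeff_add, Polynomial.coeff_C, Polynomial.coeff_C_mul, Polynomial.coeff_X]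
    rcases n with _ | _ | n
    · simp
    · rw [add_comm 1 e]
      simp [Nat.choose_succ_self_right]
    · have h0 : p.coeff (n + 2 + e) = 0 := Polynomial.coeff_eq_zero_of_natDegree_lt (by omega)
      simp [h0]
  rw [h1]
  simp
  ring

open Polynomial in
/-- If `p(x+y) = p(x)` in `ℂ[x,y]` then `p` is constant. -/
lemma my_const_of_shift (p : ℂ[X])
    (hp : Polynomial.aeval ((MvPolynomial.X 0 + MvPolynomial.X 1 : AA)) p
        = Polynomial.aeval ((MvPolynomial.X 0 : AA)) p) :
    p = Polynomial.C (p.coeff 0) := by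
  have h2 := congrArg (MvPolynomial.aeval (R := ℂ) ![(0 : ℂ[X]), Polynomial.X]) hp
  rw [← Polynomial.aeval_algHom_apply, ← Polynomial.aeval_algHom_apply] at h2
  simp only [map_add, MvPolynomial.aeval_X, Matrix.cons_val_zero, Matrix.cons_val_one,
    Matrix.head_cons, zero_add, Polynomial.aeval_X_left_apply] at h2
  rw [Polynomial.aeval_def, Polynomial.eval₂_at_zero, Polynomial.algebraMap_eq] at h2
  exact h2

open Polynomial in
/-- An additive polynomial function on `ℂ` is linear. -/
lemma my_additive_linear (h : ℂ[X]) (hadd : ∀ s t : ℂ, h.eval (s + t) = h.eval s + h.eval t) :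
    ∃ c : ℂ, h = Polynomial.C c * Polynomial.X := by
  refine ⟨h.eval 1, ?_⟩
  have h0 : h.eval 0 = 0 := by have := hadd 0 0; simpa using this
  have hn : ∀ n : ℕ, h.eval (n : ℂ) = n * h.eval 1 := by
    intro n
    induction n with
    | zero => simpa using h0
    | succ k ih => push_cast; rw [hadd k 1, ih]; ring
  have hz : h - Polynomial.C (h.eval 1) * Polynomial.X = 0 := by
    apply eq_zero_of_infinite_isRoot
    apply Set.infinite_of_injective_forall_mem (f := fun n : ℕ => (n : ℂ)) Nat.cast_injective
    intro n
    simp only [Set.mem_setOf_eq, Polynomial.IsRoot, Polynomial.eval_sub, Polynomial.eval_mul, Polynomial.eval_C, Polynomial.eval_X, hn n]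
    ring
  exact sub_eq_zero.mp hz

open Polynomial in
/-- `f(λ,∂)` as a polynomial in `∂` with coefficients in `ℂ[λ]`. -/
noncomputable def Sm : MvPolynomial (Fin 2) ℂ →ₐ[ℂ] Polynomial (Polynomial ℂ) :=
  MvPolynomial.aeval ![Polynomial.C Polynomial.X, Polynomial.X]

open Polynomial in
/-- The inverse substitution to `Sm`. -/
noncomputable def tauM : Polynomial (Polynomial ℂ) →ₐ[ℂ] AA :=
  ((Polynomial.aeval (MvPolynomial.X 1 : AA)).restrictScalars ℂ).comp
    (Polynomial.mapAlgHom (Polynomial.aeval (MvPolynomial.X 0 : AA)))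

lemma tauM_Sm (g : MvPolynomial (Fin 2) ℂ) : tauM (Sm g) = g := by
  have h1 : tauM.comp Sm = AlgHom.id ℂ (MvPolynomial (Fin 2) ℂ) := by
    apply MvPolynomial.algHom_ext
    intro i
    fin_cases i <;> simp [tauM, Sm, Polynomial.mapAlgHom]
  exact congrArg (fun ψ => ψ g) h1

/-- `f(c, ∂)` for `c : AA`. -/
noncomputable def Gm (f : MvPolynomial (Fin 2) ℂ) (c : AA) : Polynomial AA :=
  MvPolynomial.aeval ![Polynomial.C c, Polynomial.X] f

open Polynomial in
lemma Gm_eq_map (f : MvPolynomial (Fin 2) ℂ) (c : AA) :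
    Gm f c = (Sm f).map ((Polynomial.aeval c : ℂ[X] →ₐ[ℂ] AA) : ℂ[X] →+* AA) := by
  have h1 : (Polynomial.mapAlgHom (Polynomial.aeval c : ℂ[X] →ₐ[ℂ] AA)).comp Sm
      = (MvPolynomial.aeval ![Polynomial.C c, Polynomial.X] :
          MvPolynomial (Fin 2) ℂ →ₐ[ℂ] Polynomial AA) := by
    apply MvPolynomial.algHom_ext
    intro i
    fin_cases i <;> simp [Sm, Polynomial.mapAlgHom]
  exact (congrArg (fun ψ => ψ f) h1).symm

open Polynomial in
lemma Gm_coeff (f : MvPolynomial (Fin 2) ℂ) (c : AA) (k : ℕ) :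
    (Gm f c).coeff k = Polynomial.aeval c ((Sm f).coeff k) := by
  rw [Gm_eq_map, Polynomial.coeff_map]; rfl

open Polynomial in
lemma Gm_natDegree_le (f : MvPolynomial (Fin 2) ℂ) (c : AA) :
    (Gm f c).natDegree ≤ (Sm f).natDegree := by
  rw [Gm_eq_map]; exact Polynomial.natDegree_map_le

open Polynomial in
lemma Gm_shift (f : MvPolynomial (Fin 2) ℂ) (c r : AA) :
    MvPolynomial.aeval ![Polynomial.C c, Polynomial.X + Polynomial.C r] f
      = taylor r (Gm f c) := by
  have h1 : (((Polynomial.aeval (Polynomial.X + Polynomial.C r :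
        Polynomial AA)).restrictScalars ℂ).comp
      (MvPolynomial.aeval ![Polynomial.C c, Polynomial.X]))
      = (MvPolynomial.aeval ![Polynomial.C c, Polynomial.X + Polynomial.C r]
        : MvPolynomial (Fin 2) ℂ →ₐ[ℂ] Polynomial AA) := by
    apply MvPolynomial.algHom_ext
    intro i
    fin_cases i <;> simp
  rw [← h1]
  show Polynomial.aeval _ (Gm f c) = _
  rw [← Polynomial.comp_eq_aeval, Polynomial.taylor_apply]

open Polynomial in
noncomputable def Tm : MvPolynomial (Fin 3) ℂ →ₐ[ℂ] Polynomial AA :=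
  MvPolynomial.aeval ![Polynomial.C (MvPolynomial.X 0), Polynomial.C (MvPolynomial.X 1),
    Polynomial.X]

lemma Tm_sub2 (f : MvPolynomial (Fin 2) ℂ) (a b : MvPolynomial (Fin 3) ℂ) :
    Tm (sub2 f a b) = MvPolynomial.aeval ![Tm a, Tm b] f := by
  rw [sub2,
    show Tm (MvPolynomial.aeval ![a, b] f) = (Tm.comp (MvPolynomial.aeval ![a, b])) f from rfl,
    MvPolynomial.comp_aeval]
  have hv : (fun i => Tm (![a, b] i)) = ![Tm a, Tm b] := by
    funext i; fin_cases i <;> rfl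
  rw [hv]

open Polynomial in
theorem key_linear (f : MvPolynomial (Fin 2) ℂ) (hnc : ¬ ∃ c : ℂ, f = MvPolynomial.C c)
    (α : ℤ) (hα : α ≠ 0) (h : Polynomial ℂ)
    (heq : MvPolynomial.C (α : ℂ) * MvPolynomial.X 1 *
        (sub2 f (MvPolynomial.X 0 + MvPolynomial.X 1) (MvPolynomial.X 2)
          - sub2 f (MvPolynomial.X 0) (MvPolynomial.X 2))
        = Polynomial.aeval (MvPolynomial.X 1 : MvPolynomial (Fin 3) ℂ) h
          * (sub2 f (MvPolynomial.X 0) (MvPolynomial.X 2 + MvPolynomial.X 1)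
            - sub2 f (MvPolynomial.X 0) (MvPolynomial.X 2))) :
    ∃ c : ℂ, h = Polynomial.C c * Polynomial.X := by
  set x : AA := MvPolynomial.X 0 with hxdef
  set y : AA := MvPolynomial.X 1 with hydef
  have hyne : y ≠ 0 := MvPolynomial.X_ne_zero 1
  have hαC : (MvPolynomial.C (α : ℂ) : AA) ≠ 0 := by
    have hα' : (α : ℂ) ≠ 0 := Int.cast_ne_zero.mpr hα
    intro hc
    exact hα' (MvPolynomial.C_injective (Fin 2) ℂ (by rw [hc, map_zero]))
  have hay : MvPolynomial.C (α : ℂ) * y ≠ 0 := mul_ne_zero hαC hyne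
  set H : AA := Polynomial.aeval y h with hH
  -- transform the hypothesis into an identity in `(ℂ[λ,μ])[∂]`
  have E1 : Polynomial.C (MvPolynomial.C (α : ℂ) * y) * (Gm f (x + y) - Gm f x)
      = Polynomial.C H * (taylor y (Gm f x) - Gm f x) := by
    have t0 := congrArg Tm heq
    simp only [map_mul, map_sub, Tm_sub2] at t0
    have v1 : (![Tm (MvPolynomial.X 0 + MvPolynomial.X 1), Tm (MvPolynomial.X 2)])
        = ![Polynomial.C (x + y), (Polynomial.X : Polynomial AA)] := by
      funext i; fin_cases i <;> simp [Tm, hxdef, hydef]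
    have v2 : (![Tm (MvPolynomial.X 0), Tm (MvPolynomial.X 2)])
        = ![Polynomial.C x, (Polynomial.X : Polynomial AA)] := by
      funext i; fin_cases i <;> simp [Tm, hxdef, hydef]
    have v3 : (![Tm (MvPolynomial.X 0), Tm (MvPolynomial.X 2 + MvPolynomial.X 1)])
        = ![Polynomial.C x, Polynomial.X + Polynomial.C y] := by
      funext i; fin_cases i <;> simp [Tm, hxdef, hydef]
    rw [v1, v2, v3] at t0
    have tC : Tm (MvPolynomial.C (α : ℂ)) = Polynomial.C (MvPolynomial.C (α : ℂ)) := by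
      simp [Tm, Polynomial.algebraMap_apply, MvPolynomial.algebraMap_eq]
    have tX1 : Tm (MvPolynomial.X 1) = Polynomial.C y := by simp [Tm, hydef]
    have th : Tm (Polynomial.aeval (MvPolynomial.X 1 : MvPolynomial (Fin 3) ℂ) h)
        = Polynomial.C H := by
      rw [← Polynomial.aeval_algHom_apply]
      have h2 := Polynomial.aeval_algHom_apply (IsScalarTower.toAlgHom ℂ AA (Polynomial AA)) y h
      simp only [IsScalarTower.coe_toAlgHom', Polynomial.algebraMap_eq] at h2
      rw [tX1, ← h2]
    rw [tC, tX1, th, Gm_shift] at t0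
    rw [Polynomial.C_mul]
    exact t0
  have coeffE : ∀ k : ℕ,
      (MvPolynomial.C (α : ℂ) * y) * (Polynomial.aeval (x + y) ((Sm f).coeff k)
          - Polynomial.aeval x ((Sm f).coeff k))
        = H * ((taylor y (Gm f x)).coeff k - Polynomial.aeval x ((Sm f).coeff k)) := by
    intro k
    have hc := congrArg (fun p : Polynomial AA => p.coeff k) E1
    simpa only [Polynomial.coeff_C_mul, Polynomial.coeff_sub, Gm_coeff] using hc
  rcases hd : (Sm f).natDegree with _ | e
  · -- `f` does not depend on `∂`; contradiction with nonconstancy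
    exfalso
    set B0 : Polynomial ℂ := (Sm f).coeff 0 with hB0def
    have hSf : Sm f = Polynomial.C B0 := Polynomial.eq_C_of_natDegree_eq_zero hd
    have hGx : Gm f x = Polynomial.C (Polynomial.aeval x B0) := by
      rw [Gm_eq_map, hSf, Polynomial.map_C]; rfl
    have hE : Polynomial.C (MvPolynomial.C (α : ℂ) * y) * (Gm f (x + y) - Gm f x) = 0 := by
      rw [E1, hGx, Polynomial.taylor_C, sub_self, mul_zero]
    have hsub : Gm f (x + y) = Gm f x := by
      rcases mul_eq_zero.mp hE with h0 | h0
      · exact absurd (Polynomial.C_eq_zero.mp h0) hay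
      · exact sub_eq_zero.mp h0
    have hB := congrArg (fun p : Polynomial AA => p.coeff 0) hsub
    simp only [Gm_coeff] at hB
    rw [← hB0def] at hB
    obtain ⟨c0, hc0⟩ : ∃ c : ℂ, B0 = Polynomial.C c := ⟨_, my_const_of_shift _ hB⟩
    apply hnc
    refine ⟨c0, ?_⟩
    have hf : f = tauM (Sm f) := (tauM_Sm f).symm
    rw [hf, hSf, hc0]
    have hco : (Polynomial.C (Polynomial.C c0) : Polynomial (Polynomial ℂ))
        = algebraMap ℂ _ c0 := by
      rw [Polynomial.algebraMap_apply, Polynomial.algebraMap_eq]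
    rw [hco, AlgHom.commutes, MvPolynomial.algebraMap_eq]
  · -- `f` depends on `∂`
    have hSf0 : Sm f ≠ 0 := by
      intro h0
      exact hnc ⟨0, by rw [← tauM_Sm f, h0, map_zero, MvPolynomial.C_0]⟩
    have hBdne : (Sm f).coeff (e + 1) ≠ 0 := by
      rw [← hd]
      exact Polynomial.leadingCoeff_ne_zero.mpr hSf0
    have hdeg : (Gm f x).natDegree ≤ e + 1 := by
      have := Gm_natDegree_le f x
      omega
    -- Step 1: the top `∂`-coefficient of `f` is a constant
    have s1 : Polynomial.aeval (x + y) ((Sm f).coeff (e + 1))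
        = Polynomial.aeval x ((Sm f).coeff (e + 1)) := by
      have hc := coeffE (e + 1)
      rw [my_taylor_coeff_top _ _ _ hdeg, Gm_coeff, sub_self, mul_zero] at hc
      rcases mul_eq_zero.mp hc with h0 | h0
      · exact absurd h0 hay
      · exact sub_eq_zero.mp h0
    obtain ⟨a, haC⟩ : ∃ c : ℂ, (Sm f).coeff (e + 1) = Polynomial.C c :=
      ⟨_, my_const_of_shift _ s1⟩
    have hane : a ≠ 0 := by
      intro h0
      exact hBdne (by rw [haC, h0, Polynomial.C_0])
    set q : Polynomial ℂ := (Sm f).coeff e with hq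
    -- Step 2
    have s2 : MvPolynomial.C (α : ℂ) * (Polynomial.aeval (x + y) q - Polynomial.aeval x q)
        = ((e : AA) + 1) * MvPolynomial.C a * H := by
      have hc := coeffE e
      rw [my_taylor_coeff_sub1 _ _ _ hdeg, Gm_coeff, Gm_coeff, haC] at hc
      have hax : (Polynomial.aeval (x : AA)) (Polynomial.C a) = MvPolynomial.C a := by
        rw [Polynomial.aeval_C, MvPolynomial.algebraMap_eq]
      rw [hax, ← hq] at hc
      apply mul_left_cancel₀ hyne
      linear_combination hc
    -- Step 3: substitution instances
    rw [hH] at s2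
    have sub_eq : ∀ u v : AA,
        MvPolynomial.C (α : ℂ) * (Polynomial.aeval (u + v) q - Polynomial.aeval u q)
          = ((e : AA) + 1) * MvPolynomial.C a * Polynomial.aeval v h := by
      intro u v
      have t := congrArg (MvPolynomial.aeval (R := ℂ) ![u, v]) s2
      simp only [hxdef, hydef, map_mul, map_sub, map_add, map_natCast, map_one,
        ← Polynomial.aeval_algHom_apply, MvPolynomial.aeval_X, Matrix.cons_val_zero,
        Matrix.cons_val_one, Matrix.head_cons, MvPolynomial.aeval_C,
        MvPolynomial.algebraMap_eq] at t
      exact t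
    have hKne : ((e : AA) + 1) * MvPolynomial.C a ≠ 0 := by
      apply mul_ne_zero
      · have : (((e : ℕ) + 1 : ℕ) : AA) ≠ 0 := Nat.cast_ne_zero.mpr (Nat.succ_ne_zero e)
        push_cast at this
        exact this
      · intro hc
        exact hane (MvPolynomial.C_injective (Fin 2) ℂ (by rw [hc, map_zero]))
    -- Step 4: additivity of h
    have hAdd : Polynomial.aeval (x + y) h = Polynomial.aeval x h + Polynomial.aeval y h := by
      have i1 := sub_eq 0 (x + y)
      have i2 := sub_eq 0 x
      have i4 := sub_eq x y
      rw [zero_add] at i1 i2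
      apply mul_left_cancel₀ hKne
      linear_combination i2 + i4 - i1
    have hev : ∀ s t : ℂ, h.eval (s + t) = h.eval s + h.eval t := by
      intro s t
      have tt := congrArg (MvPolynomial.aeval (R := ℂ) ![s, t]) hAdd
      simp only [hxdef, hydef, map_add, ← Polynomial.aeval_algHom_apply, MvPolynomial.aeval_X,
        Matrix.cons_val_zero, Matrix.cons_val_one, Matrix.head_cons] at tt
      simpa only [Polynomial.coe_aeval_eq_eval] using tt
    exact my_additive_linear h hev

end Aux

/-- If `f ∈ ℂ[λ,∂]` is nonconstant, `α` is a nonzero integer, `h ∈ ℂ[μ]`, and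
`αμ (f(λ+μ,∂) - f(λ,∂)) = h(μ) (f(λ,∂+μ) - f(λ,∂))` holds in `ℂ[λ,μ,∂]`
(`λ = X 0`, `μ = X 1`, `∂ = X 2`), then `h(μ) = Cμ` for some constant `C ∈ ℂ`. -/
theorem h_is_linear (f : MvPolynomial (Fin 2) ℂ) (hnc : ¬ ∃ c : ℂ, f = C c)
    (α : ℤ) (hα : α ≠ 0) (h : Polynomial ℂ)
    (heq : C (α : ℂ) * X 1 * (sub2 f (X 0 + X 1) (X 2) - sub2 f (X 0) (X 2))
        = Polynomial.aeval (X 1 : MvPolynomial (Fin 3) ℂ) h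
          * (sub2 f (X 0) (X 2 + X 1) - sub2 f (X 0) (X 2))) :
    ∃ c : ℂ, h = Polynomial.C c * Polynomial.X := by
  exact key_linear f hnc α hα h heq
end

section
/- Let f ∈ ℂ[λ,∂], α a nonzero integer, and c ∈ ℂ, such that α·(f(λ+μ,∂) - f(λ,∂)) = c·(f(λ,∂+μ) - f(λ,∂)) holds identically in ℂ[λ,μ,∂] (after canceling a factor of μ). Then there exists a single-variable polynomial F ∈ ℂ[s] with f(λ,∂) = F(cλ + α∂). -/
open MvPolynomial

/-- Chain rule for substituting two polynomials into a two-variable polynomial. -/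
lemma pderiv_aeval_pair {n : ℕ} (a b : MvPolynomial (Fin n) ℂ) (i : Fin n)
    (f : MvPolynomial (Fin 2) ℂ) :
    pderiv i (aeval ![a, b] f)
      = aeval ![a, b] (pderiv 0 f) * pderiv i a + aeval ![a, b] (pderiv 1 f) * pderiv i b := by
  induction f using MvPolynomial.induction_on with
  | C r => simp
  | add p q hp hq => simp only [map_add, hp, hq, add_mul]; ring
  | mul_X p j hp =>
    fin_cases j <;>
    · simp only [Fin.mk_zero, Fin.mk_one, Fin.isValue, map_mul, map_add, aeval_X, pderiv_mul,
        hp, Matrix.cons_val_zero, Matrix.cons_val_one, Matrix.head_cons, pderiv_X_self,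
        pderiv_X_of_ne (by decide : (0 : Fin 2) ≠ 1),
        pderiv_X_of_ne (by decide : (1 : Fin 2) ≠ 0), map_one, map_zero, mul_one, mul_zero,
        zero_mul, add_zero, zero_add, one_mul]
      ring

lemma coeff_pderiv'' {n : ℕ} (p : MvPolynomial (Fin n) ℂ) (i : Fin n) (m : Fin n →₀ ℕ) :
    coeff m (pderiv i p) = ((m i : ℂ) + 1) * coeff (m + Finsupp.single i 1) p := by
  induction p using MvPolynomial.induction_on' with
  | add p q hp hq => simp [hp, hq, mul_add]
  | monomial s a =>
    rw [pderiv_monomial, coeff_monomial, coeff_monomial]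
    by_cases h : s = m + Finsupp.single i 1
    · subst h
      have h1 : m + Finsupp.single i 1 - Finsupp.single i 1 = m := by
        ext j
        simp [Finsupp.single_apply]
      have h2 : (m + Finsupp.single i 1 : Fin n →₀ ℕ) i = m i + 1 := by
        simp [Finsupp.single_apply]
      rw [if_pos h1, if_pos rfl, h2]
      push_cast; ring
    · rw [if_neg h]
      by_cases hsi : s i = 0
      · split_ifs <;> simp [hsi]
      · have : s - Finsupp.single i 1 ≠ m := by
          intro he
          apply h
          rw [← he, tsub_add_cancel_of_le]
          rwa [Finsupp.single_le_iff, Nat.one_le_iff_ne_zero]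
        rw [if_neg this, mul_zero]

/-- A two-variable polynomial with vanishing derivative in the second variable is a
polynomial in the first variable. -/
lemma exists_of_pderiv_one_eq_zero (g : MvPolynomial (Fin 2) ℂ)
    (hg : pderiv 1 g = 0) :
    ∃ F : Polynomial ℂ, g = Polynomial.aeval (X 0 : MvPolynomial (Fin 2) ℂ) F := by
  have hmem : g ∈ (Polynomial.aeval (X 0 : MvPolynomial (Fin 2) ℂ) : Polynomial ℂ →ₐ[ℂ] MvPolynomial (Fin 2) ℂ).range := by
    rw [g.as_sum]
    apply Subalgebra.sum_mem
    intro m hm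
    have hm1 : m 1 = 0 := by
      by_contra hne
      obtain ⟨k, hk⟩ : ∃ k, m 1 = k + 1 := ⟨m 1 - 1, (Nat.succ_pred_eq_of_pos (Nat.pos_of_ne_zero hne)).symm⟩
      have hle : Finsupp.single (1 : Fin 2) 1 ≤ m := by
        rw [Finsupp.single_le_iff]; omega
      have hco := coeff_pderiv'' g 1 (m - Finsupp.single 1 1)
      rw [hg, coeff_zero, tsub_add_cancel_of_le hle] at hco
      have : coeff m g = 0 := by
        rcases mul_eq_zero.mp hco.symm with h' | h'
        · exfalso
          have : (((m - Finsupp.single 1 1 : Fin 2 →₀ ℕ) 1 : ℕ) : ℂ) + 1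
              = (((m - Finsupp.single 1 1 : Fin 2 →₀ ℕ) 1 + 1 : ℕ) : ℂ) := by push_cast; ring
          rw [this] at h'
          exact Nat.cast_ne_zero.mpr (Nat.succ_ne_zero _) h'
        · exact h'
      exact (MvPolynomial.mem_support_iff.mp hm) this
    have hmeq : m = Finsupp.single 0 (m 0) := by
      ext j
      fin_cases j
      · simp
      · simp [hm1]
    have lem : ∀ (k : ℕ) (a : ℂ), (monomial (Finsupp.single (0 : Fin 2) k) a)
        ∈ (Polynomial.aeval (X 0 : MvPolynomial (Fin 2) ℂ) :
            Polynomial ℂ →ₐ[ℂ] MvPolynomial (Fin 2) ℂ).range := by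
      intro k a
      refine ⟨Polynomial.C a * Polynomial.X ^ k, ?_⟩
      show Polynomial.aeval (X 0 : MvPolynomial (Fin 2) ℂ) (Polynomial.C a * Polynomial.X ^ k) = _
      rw [map_mul, map_pow, Polynomial.aeval_X, Polynomial.aeval_C, monomial_eq,
        Finsupp.prod_single_index (by simp)]
      rfl
    rw [hmeq]
    exact lem _ _
  obtain ⟨F, hF⟩ := hmem
  exact ⟨F, hF.symm⟩

lemma aeval_pair_XX (p : MvPolynomial (Fin 2) ℂ) :
    aeval ![(X 0 : MvPolynomial (Fin 2) ℂ), X 1] p = p := by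
  have : ![(X 0 : MvPolynomial (Fin 2) ℂ), X 1] = X := by
    funext i; fin_cases i <;> rfl
  rw [this, aeval_X_left_apply]

/-- If `f ∈ ℂ[λ,∂]`, `α` is a nonzero integer, `c ∈ ℂ`, and
`α (f(λ+μ,∂) - f(λ,∂)) = c (f(λ,∂+μ) - f(λ,∂))` holds in `ℂ[λ,μ,∂]`
(`λ = X 0`, `μ = X 1`, `∂ = X 2`), then `f(λ,∂) = F(cλ + α∂)` for some one-variable
polynomial `F ∈ ℂ[s]`. -/
theorem pde_solution (f : MvPolynomial (Fin 2) ℂ) (α : ℤ) (hα : α ≠ 0) (c : ℂ)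
    (heq : C (α : ℂ) * (sub2 f (X 0 + X 1) (X 2) - sub2 f (X 0) (X 2))
        = C c * (sub2 f (X 0) (X 2 + X 1) - sub2 f (X 0) (X 2))) :
    ∃ F : Polynomial ℂ,
      f = Polynomial.aeval (C c * X 0 + C (α : ℂ) * X 1 : MvPolynomial (Fin 2) ℂ) F := by
  have hαC : ((α : ℂ)) ≠ 0 := by exact_mod_cast hα
  -- Step 1: the PDE α ∂₀f = c ∂₁f
  have hpde : C (α : ℂ) * pderiv 0 f = C c * pderiv 1 f := by
    have h := congrArg (pderiv (1 : Fin 3)) heq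
    rw [pderiv_C_mul, pderiv_C_mul, map_sub, map_sub] at h
    unfold sub2 at h
    rw [pderiv_aeval_pair, pderiv_aeval_pair, pderiv_aeval_pair] at h
    simp only [map_add, pderiv_X_self,
      pderiv_X_of_ne (by decide : (0 : Fin 3) ≠ 1),
      pderiv_X_of_ne (by decide : (2 : Fin 3) ≠ 1),
      mul_zero, mul_one, add_zero, zero_add, sub_zero, sub_self] at h
    -- substitute μ := 0
    have h2 := congrArg (aeval (R := ℂ) ![(X 0 : MvPolynomial (Fin 2) ℂ), 0, X 1]) h
    rw [map_mul, map_mul, comp_aeval_apply, comp_aeval_apply, aeval_C, aeval_C] at h2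
    have e1 : (fun i => aeval (R := ℂ) ![(X 0 : MvPolynomial (Fin 2) ℂ), 0, X 1]
        (![(X 0 : MvPolynomial (Fin 3) ℂ) + X 1, X 2] i)) = ![X 0, X 1] := by
      funext i; fin_cases i <;> simp
    have e2 : (fun i => aeval (R := ℂ) ![(X 0 : MvPolynomial (Fin 2) ℂ), 0, X 1]
        (![(X 0 : MvPolynomial (Fin 3) ℂ), X 2 + X 1] i)) = ![X 0, X 1] := by
      funext i; fin_cases i <;> simp
    rw [e1, e2, aeval_pair_XX, aeval_pair_XX] at h2
    simpa [algebraMap_eq] using h2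
  -- Step 2: the change of variables
  set v : Fin 2 → MvPolynomial (Fin 2) ℂ :=
    ![X 1, C ((α : ℂ)⁻¹) * (X 0 - C c * X 1)] with hv
  set g : MvPolynomial (Fin 2) ℂ := aeval v f with hgdef
  have hvg : pderiv 1 g = 0 := by
    have hchain := pderiv_aeval_pair (n := 2) (X 1) (C ((α : ℂ)⁻¹) * (X 0 - C c * X 1)) 1 f
    rw [← hv] at hchain
    have haeq : aeval v (C (α : ℂ) * pderiv 0 f) = aeval v (C c * pderiv 1 f) :=
      congrArg _ hpde
    rw [map_mul, map_mul, aeval_C, aeval_C] at haeq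
    simp only [algebraMap_eq] at haeq
    rw [hgdef, hchain, pderiv_X_self (1 : Fin 2), pderiv_C_mul, map_sub, pderiv_C_mul,
      pderiv_X_of_ne (show (0 : Fin 2) ≠ 1 by decide), pderiv_X_self (1 : Fin 2)]
    have expand : aeval v (pderiv 0 f)
        = C ((α : ℂ)⁻¹) * (C c * aeval v (pderiv 1 f)) := by
      rw [← haeq, ← mul_assoc, ← C_mul, inv_mul_cancel₀ hαC, C_1, one_mul]
    rw [expand]
    ring
  obtain ⟨F, hF⟩ := exists_of_pderiv_one_eq_zero g hvg
  refine ⟨F, ?_⟩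
  -- Step 3: undo the change of variables
  have hback : aeval ![C c * X 0 + C (α : ℂ) * X 1, (X 0 : MvPolynomial (Fin 2) ℂ)] g = f := by
    rw [hgdef, comp_aeval_apply]
    have e3 : (fun i => aeval (R := ℂ) ![C c * X 0 + C (α : ℂ) * X 1,
        (X 0 : MvPolynomial (Fin 2) ℂ)] (v i)) = ![X 0, X 1] := by
      funext i
      fin_cases i
      · simp [hv]
      · show aeval _ (C ((α : ℂ)⁻¹) * (X 0 - C c * X 1)) = X 1
        rw [map_mul, map_sub, map_mul, aeval_X, aeval_X, aeval_C, aeval_C]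
        simp only [algebraMap_eq]
        simp only [Matrix.cons_val_zero, Matrix.cons_val_one, Matrix.head_cons]
        rw [show (C c * X 0 + C (α : ℂ) * X 1 - C c * X 0 : MvPolynomial (Fin 2) ℂ)
            = C (α : ℂ) * X 1 by ring,
          ← mul_assoc, ← C_mul, inv_mul_cancel₀ hαC, C_1, one_mul]
    rw [e3, aeval_pair_XX]
  rw [← hback, hF, ← Polynomial.aeval_algHom_apply, aeval_X]
  simp
end

section
/- Let C, D ∈ ℂ. Define f_{α,γ}(λ,∂) = (α+γ+C)λ + α(∂+D) for α,γ ∈ ℤ. Then these polynomials satisfy the structure coefficient equation (βλ - αμ) f_{α+β,γ}(λ+μ, ∂) = f_{β,γ}(μ, ∂+λ) f_{α,β+γ}(λ, ∂) - f_{α,γ}(λ, ∂+μ) f_{β,α+γ}(μ, ∂) for all α,β,γ ∈ ℤ. (Hence V_{C,D} is a conformal B-module.) -/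
open MvPolynomial

/-- The structure coefficients `f_{α,γ}(λ,∂) = (α+γ+C)λ + α(∂+D)` of `V_{C,D}` satisfy
the structure coefficient equation; hence `V_{C,D}` is a conformal `B`-module. -/
theorem VCD_is_module (Cc D : ℂ) :
    StructEq (fun α γ =>
      C ((α : ℂ) + (γ : ℂ) + Cc) * X 0 + C (α : ℂ) * (X 1 + C D)) := by
  intro α β γ
  simp only [sub2, map_add, map_mul, aeval_C, aeval_X, Matrix.cons_val_zero, Matrix.cons_val_one,
    Matrix.head_cons, MvPolynomial.algebraMap_eq]
  push_cast
  simp only [C_add]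
  ring
end
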